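/- Let δ > 0 and let r, k be positive integers. If A ⊆ ℕ is a set of upper density at least δ, then for every r-edge-coloring of the complete graph on A there exist natural numbers a ≥ 1 and d₁, …, d_k ≥ 1 such that the Hilbert cube H(a; d₁, …, d_k) is contained in A, its 2^k elements are distinct, and it is a monochromatic clique under the coloring. -/

import Mathlib

open Finset

namespace ARUD

/-! ### Letters for the Hales–Jewett encoding of pairs of sets -/

inductive HL : Type where
  | z : HL  -- in neither set
  | b : HL  -- in both sets
  | l : HL  -- in left set only
  | r : HL  -- in right set only
  deriving DecidableEq

instance : Fintype HL :=
  ⟨⟨{HL.z, HL.b, HL.l, HL.r}, by decide⟩, by intro x; cases x <;> decide⟩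

/-! ### Super-increasing sequences have injective subset sums -/

theorem inj_of_superincr {j : ℕ} (d : Fin j → ℕ)
    (h : ∀ i : Fin j, (∑ i' ∈ univ.filter (· < i), d i') < d i) :
    Function.Injective fun I : Finset (Fin j) => ∑ i ∈ I, d i := by
  have main : ∀ I J : Finset (Fin j), (∃ M, M ∈ I \ J ∧ ∀ x ∈ J \ I, x < M) →
      ∑ i ∈ J, d i < ∑ i ∈ I, d i := by
    rintro I J ⟨M, hMI, hmax⟩
    have h1 : ∑ i ∈ J \ I, d i < d M := by
      calc ∑ i ∈ J \ I, d i ≤ ∑ i' ∈ univ.filter (· < M), d i' := by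
            apply sum_le_sum_of_subset
            intro x hx
            simp only [mem_filter, mem_univ, true_and]
            exact hmax x hx
        _ < d M := h M
    have h2 : d M ≤ ∑ i ∈ I \ J, d i :=
      single_le_sum (fun _ _ => Nat.zero_le _) hMI
    have e1 := Finset.sum_inter_add_sum_sdiff I J d
    have e2 := Finset.sum_inter_add_sum_sdiff J I d
    rw [Finset.inter_comm] at e2
    omega
  intro I J hIJ
  simp only at hIJ
  by_contra hne
  have hU : ((I \ J) ∪ (J \ I)).Nonempty := by
    rw [Finset.nonempty_iff_ne_empty]
    intro hemp
    rw [Finset.union_eq_empty] at hemp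
    exact hne (Finset.Subset.antisymm
      (fun x hx => by
        by_contra hxJ
        have : x ∈ I \ J := Finset.mem_sdiff.2 ⟨hx, hxJ⟩
        simp [hemp.1] at this)
      (fun x hx => by
        by_contra hxI
        have : x ∈ J \ I := Finset.mem_sdiff.2 ⟨hx, hxI⟩
        simp [hemp.2] at this))
  set M := ((I \ J) ∪ (J \ I)).max' hU with hM
  have hMmem := Finset.max'_mem _ hU
  rcases Finset.mem_union.1 hMmem with hc | hc
  · have := main I J ⟨M, hc, fun x hx => ?_⟩
    · omega
    · refine lt_of_le_of_ne (Finset.le_max' _ _ (Finset.mem_union.2 (Or.inr hx))) ?_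
      intro hxM
      rw [hxM] at hx
      exact (Finset.mem_sdiff.1 hc).2 (Finset.mem_sdiff.1 hx).1
  · have := main J I ⟨M, hc, fun x hx => ?_⟩
    · omega
    · refine lt_of_le_of_ne (Finset.le_max' _ _ (Finset.mem_union.2 (Or.inl hx))) ?_
      intro hxM
      rw [hxM] at hx
      exact (Finset.mem_sdiff.1 hc).2 (Finset.mem_sdiff.1 hx).1

/-! ### The popular difference lemma (one counting step) -/

theorem pop (M L n : ℕ) (hM : 1 ≤ M) (B : Finset ℕ) (hB : B ⊆ Finset.Icc 1 n)
    (hcard : n ≤ B.card * M) (hn : 4 * (M ^ 2 * (4 * L + 8)) * M ≤ n) :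
    ∃ d, L < d ∧ d ≤ M ^ 2 * (4 * L + 8) ∧
      n ≤ (B.filter fun x => x + d ∈ B).card * (M ^ 2 * (4 * L + 8)) := by
  classical
  set P := M ^ 2 * (4 * L + 8) with hP
  have hM2 : 1 ≤ M ^ 2 := Nat.one_le_pow _ _ hM
  have hP8 : 8 ≤ P := by
    calc 8 ≤ 1 * (4 * L + 8) := by omega
      _ ≤ M ^ 2 * (4 * L + 8) := by
        exact Nat.mul_le_mul_right _ hM2
  have hPpos : 0 < P := by omega
  have hPn : P ≤ n := by
    calc P ≤ 4 * P * 1 := by omega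
      _ ≤ 4 * P * M := by exact Nat.mul_le_mul_left _ hM
      _ ≤ n := hn
  have hnpos : 0 < n := by omega
  set s := B.card with hs
  have hsn : s ≤ n := by
    calc s ≤ (Finset.Icc 1 n).card := Finset.card_le_card hB
      _ = n := by rw [Nat.card_Icc]; omega
  have hs1 : 1 ≤ s := by
    rcases Nat.eq_zero_or_pos s with h0 | h1
    · rw [h0] at hcard; simp at hcard; omega
    · exact h1
  set ν : ℕ → ℕ := fun x => (x - 1) / P with hν
  set Tn := (n - 1) / P + 1 with hTn
  have hTnpos : 0 < Tn := Nat.succ_pos _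
  have hTnP : Tn * P ≤ 2 * n := by
    have h1 := Nat.div_mul_le_self (n - 1) P
    calc Tn * P = ((n - 1) / P) * P + P := by rw [hTn]; ring
      _ ≤ (n - 1) + P := Nat.add_le_add_right h1 P
      _ ≤ 2 * n := by omega
  have hmapsto : ∀ x ∈ B, ν x ∈ Finset.range Tn := by
    intro x hx
    have hx' := hB hx
    rw [Finset.mem_Icc] at hx'
    rw [Finset.mem_range]
    have h2 : (x - 1) / P ≤ (n - 1) / P := Nat.div_le_div_right (by omega)
    show (x - 1) / P < Tn
    rw [hTn]
    omega
  set c : ℕ → ℕ := fun t => (B.filter fun x => ν x = t).card with hc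
  have hsum : ∑ t ∈ Finset.range Tn, c t = s :=
    (Finset.card_eq_sum_card_fiberwise hmapsto).symm
  have hCS : s ^ 2 ≤ Tn * ∑ t ∈ Finset.range Tn, c t ^ 2 := by
    have h := sq_sum_le_card_mul_sum_sq (s := Finset.range Tn) (f := c)
    rwa [hsum, Finset.card_range] at h
  -- the set of ordered pairs of distinct elements in a common interval
  set PP := (B ×ˢ B).filter (fun p => p.1 ≠ p.2 ∧ ν p.1 = ν p.2) with hPP
  have hPPmapsto : ∀ p ∈ PP, ν p.1 ∈ Finset.range Tn := by
    intro p hp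
    rw [hPP, Finset.mem_filter, Finset.mem_product] at hp
    exact hmapsto p.1 hp.1.1
  have hPPfiber : ∀ t, PP.filter (fun p => ν p.1 = t)
      = (B.filter fun x => ν x = t).offDiag := by
    intro t
    ext p
    simp only [hPP, Finset.mem_filter, Finset.mem_product, Finset.mem_offDiag]
    constructor
    · rintro ⟨⟨⟨h1, h2⟩, hne, hνν⟩, hνt⟩
      exact ⟨⟨h1, hνt⟩, ⟨h2, by rw [← hνν]; exact hνt⟩, hne⟩
    · rintro ⟨⟨h1, hνt⟩, ⟨h2, hνt'⟩, hne⟩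
      exact ⟨⟨⟨h1, h2⟩, hne, by rw [hνt, hνt']⟩, hνt⟩
  have hPPcard : PP.card = ∑ t ∈ Finset.range Tn, (c t * c t - c t) := by
    rw [Finset.card_eq_sum_card_fiberwise hPPmapsto]
    refine Finset.sum_congr rfl fun t _ => ?_
    rw [hPPfiber t, Finset.offDiag_card]
  have hPP2 : s ^ 2 ≤ Tn * (PP.card + s) := by
    have he : PP.card + s = ∑ t ∈ Finset.range Tn, c t ^ 2 := by
      rw [hPPcard, ← hsum, ← Finset.sum_add_distrib]
      refine Finset.sum_congr rfl fun t _ => ?_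
      have hle : c t ≤ c t * c t := by
        rcases Nat.eq_zero_or_pos (c t) with h0 | h0
        · simp [h0]
        · exact Nat.le_mul_of_pos_left _ h0
      rw [pow_two]
      omega
    rw [he]
    exact hCS
  -- near pairs
  set NEAR := PP.filter (fun p => p.2 - p.1 ≤ L ∧ p.1 - p.2 ≤ L) with hNEAR
  have hNEARcard : NEAR.card ≤ s * (2 * L) := by
    have hle : NEAR.card ≤ (B ×ˢ Finset.Icc 1 (2 * L)).card := by
      apply Finset.card_le_card_of_injOn
        (fun p => (p.1, if p.1 < p.2 then p.2 - p.1 else L + (p.1 - p.2)))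
      · intro p hp
        simp only [Finset.mem_coe, hNEAR, hPP, Finset.mem_filter, Finset.mem_product] at hp
        obtain ⟨⟨⟨hp1, hp2⟩, hne, hνν⟩, hL1, hL2⟩ := hp
        simp only [Finset.mem_coe, Finset.mem_product, Finset.mem_Icc]
        refine ⟨hp1, ?_⟩
        by_cases hlt : p.1 < p.2
        · simp only [if_pos hlt]; omega
        · simp only [if_neg hlt]
          have : p.1 ≠ p.2 := hne
          omega
      · intro p hp q hq heq
        rw [Finset.mem_coe, hNEAR, Finset.mem_filter, hPP, Finset.mem_filter,
          Finset.mem_product] at hp hq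
        obtain ⟨⟨⟨hp1, hp2⟩, hpne, _⟩, hpL1, hpL2⟩ := hp
        obtain ⟨⟨⟨hq1, hq2⟩, hqne, _⟩, hqL1, hqL2⟩ := hq
        simp only [Prod.mk.injEq] at heq
        obtain ⟨h1, h2⟩ := heq
        have : p.2 = q.2 := by
          by_cases hplt : p.1 < p.2 <;> by_cases hqlt : q.1 < q.2 <;>
            simp only [if_pos, if_neg, hplt, hqlt, ite_true, ite_false] at h2 <;>
            omega
        exact Prod.ext h1 this
    calc NEAR.card ≤ (B ×ˢ Finset.Icc 1 (2 * L)).card := hle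
      _ = s * (2 * L) := by
        have h21 : 2 * L + 1 - 1 = 2 * L := by omega
        rw [Finset.card_product, Nat.card_Icc, h21, ← hs]
  set FAR := PP \ NEAR with hFAR
  have hFARlow : PP.card ≤ FAR.card + s * (2 * L) := by
    have h := Finset.card_sdiff_add_card_eq_card (Finset.filter_subset
      (fun p => p.2 - p.1 ≤ L ∧ p.1 - p.2 ≤ L) PP)
    rw [← hNEAR, ← hFAR] at h
    omega
  -- each far pair has difference in (L, P]
  have hsame : ∀ x y, x ∈ B → y ∈ B → ν x = ν y → x - y < P ∧ y - x < P := by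
    intro x y hx hy hxy
    have hx' := hB hx
    have hy' := hB hy
    rw [Finset.mem_Icc] at hx' hy'
    simp only [hν] at hxy
    have e1 := Nat.div_add_mod (x - 1) P
    have e2 := Nat.div_add_mod (y - 1) P
    have m1 := Nat.mod_lt (x - 1) hPpos
    have m2 := Nat.mod_lt (y - 1) hPpos
    rw [← hxy] at e2
    omega
  set dif : ℕ × ℕ → ℕ := fun p => max p.1 p.2 - min p.1 p.2 with hdif
  have hFARmapsto : ∀ p ∈ FAR, dif p ∈ Finset.Ioc L P := by
    intro p hp
    rw [hFAR, Finset.mem_sdiff] at hp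
    obtain ⟨hpPP, hnear⟩ := hp
    have hpPP' := hpPP
    rw [hPP, Finset.mem_filter, Finset.mem_product] at hpPP'
    obtain ⟨⟨hp1, hp2⟩, hne, hνν⟩ := hpPP'
    have hd := hsame p.1 p.2 hp1 hp2 hνν
    rw [Finset.mem_Ioc]
    have : ¬(p.2 - p.1 ≤ L ∧ p.1 - p.2 ≤ L) := by
      intro hcontra
      exact hnear (by rw [hNEAR, Finset.mem_filter]; exact ⟨hpPP, hcontra⟩)
    simp only [hdif]
    rcases Nat.lt_or_ge p.1 p.2 with hlt | hge
    · rw [max_eq_right (le_of_lt hlt), min_eq_left (le_of_lt hlt)]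
      omega
    · rw [max_eq_left hge, min_eq_right hge]
      have : p.1 ≠ p.2 := hne
      omega
  have hFARfiber : FAR.card = ∑ e ∈ Finset.Ioc L P, (FAR.filter fun p => dif p = e).card :=
    Finset.card_eq_sum_card_fiberwise hFARmapsto
  have hfiberbd : ∀ e, (FAR.filter fun p => dif p = e).card
      ≤ 2 * (B.filter fun x => x + e ∈ B).card := by
    intro e
    have hsub : FAR.filter (fun p => dif p = e) ⊆
        ((B.filter fun x => x + e ∈ B).image fun x => (x, x + e)) ∪
        ((B.filter fun x => x + e ∈ B).image fun x => (x + e, x)) := by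
      intro p hp
      rw [Finset.mem_filter] at hp
      obtain ⟨hpFAR, hpe⟩ := hp
      rw [hFAR, Finset.mem_sdiff] at hpFAR
      have hpPP' := hpFAR.1
      rw [hPP, Finset.mem_filter, Finset.mem_product] at hpPP'
      obtain ⟨⟨hp1, hp2⟩, hne, hνν⟩ := hpPP'
      rw [Finset.mem_union]
      rcases Nat.lt_or_ge p.1 p.2 with hlt | hge
      · left
        rw [Finset.mem_image]
        refine ⟨p.1, ?_, ?_⟩
        · rw [Finset.mem_filter]
          have : p.2 = p.1 + e := by
            simp only [hdif] at hpe
            rw [max_eq_right (le_of_lt hlt), min_eq_left (le_of_lt hlt)] at hpe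
            omega
          rw [← this]
          exact ⟨hp1, hp2⟩
        · have : p.2 = p.1 + e := by
            simp only [hdif] at hpe
            rw [max_eq_right (le_of_lt hlt), min_eq_left (le_of_lt hlt)] at hpe
            omega
          rw [← this]
      · right
        rw [Finset.mem_image]
        have hgt : p.2 < p.1 := by
          have : p.1 ≠ p.2 := hne
          omega
        refine ⟨p.2, ?_, ?_⟩
        · rw [Finset.mem_filter]
          have : p.1 = p.2 + e := by
            simp only [hdif] at hpe
            rw [max_eq_left hge, min_eq_right hge] at hpe
            omega
          rw [← this]
          exact ⟨hp2, hp1⟩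
        · have : p.1 = p.2 + e := by
            simp only [hdif] at hpe
            rw [max_eq_left hge, min_eq_right hge] at hpe
            omega
          rw [← this]
    calc (FAR.filter fun p => dif p = e).card ≤ _ := Finset.card_le_card hsub
      _ ≤ ((B.filter fun x => x + e ∈ B).image fun x => (x, x + e)).card
          + ((B.filter fun x => x + e ∈ B).image fun x => (x + e, x)).card :=
        Finset.card_union_le _ _
      _ ≤ 2 * (B.filter fun x => x + e ∈ B).card := by
        have h1 := Finset.card_image_le (s := B.filter fun x => x + e ∈ B)
          (f := fun x => (x, x + e))
        have h2 := Finset.card_image_le (s := B.filter fun x => x + e ∈ B)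
          (f := fun x => (x + e, x))
        omega
  -- main numeric bound : FAR.card ≥ 2n
  have hKEY : Tn * (2 * n + 2 * L * s + s) ≤ s ^ 2 := by
    have k1 : 2 * n + 2 * L * s + s ≤ n * (2 * L + 3) := by nlinarith
    have k2 : Tn * (2 * n + 2 * L * s + s) * P ≤ 2 * n * (n * (2 * L + 3)) := by
      calc Tn * (2 * n + 2 * L * s + s) * P = (Tn * P) * (2 * n + 2 * L * s + s) := by ring
        _ ≤ (2 * n) * (n * (2 * L + 3)) := Nat.mul_le_mul hTnP k1
    have k3 : n * n * (4 * L + 8) ≤ s ^ 2 * P := by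
      have : n * n ≤ (s * M) * (s * M) := Nat.mul_le_mul hcard hcard
      calc n * n * (4 * L + 8) ≤ (s * M) * (s * M) * (4 * L + 8) :=
            Nat.mul_le_mul_right _ this
        _ = s ^ 2 * P := by rw [hP]; ring
    have k4 : Tn * (2 * n + 2 * L * s + s) * P ≤ s ^ 2 * P := by
      calc Tn * (2 * n + 2 * L * s + s) * P ≤ 2 * n * (n * (2 * L + 3)) := k2
        _ = n * n * (4 * L + 6) := by ring
        _ ≤ n * n * (4 * L + 8) := Nat.mul_le_mul_left _ (by omega)
        _ ≤ s ^ 2 * P := k3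
    exact Nat.le_of_mul_le_mul_right k4 hPpos
  have hPPbig : 2 * n + 2 * L * s ≤ PP.card := by
    have h1 : Tn * (2 * n + 2 * L * s + s) ≤ Tn * (PP.card + s) := le_trans hKEY hPP2
    have h2 : 2 * n + 2 * L * s + s ≤ PP.card + s := Nat.le_of_mul_le_mul_left h1 hTnpos
    omega
  have hFARbig : 2 * n ≤ FAR.card := by
    have : s * (2 * L) = 2 * L * s := by ring
    omega
  -- pigeonhole
  by_contra hcon
  push_neg at hcon
  have hub : ∀ e ∈ Finset.Ioc L P, (FAR.filter fun p => dif p = e).card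
      ≤ 2 * ((n - 1) / P) := by
    intro e he
    rw [Finset.mem_Ioc] at he
    have h1 := hcon e he.1 he.2
    have h2 : (B.filter fun x => x + e ∈ B).card ≤ (n - 1) / P := by
      rw [Nat.le_div_iff_mul_le hPpos]
      omega
    have h3 := hfiberbd e
    omega
  have hupper : FAR.card ≤ (P - L) * (2 * ((n - 1) / P)) := by
    rw [hFARfiber]
    calc ∑ e ∈ Finset.Ioc L P, (FAR.filter fun p => dif p = e).card
        ≤ ∑ _e ∈ Finset.Ioc L P, 2 * ((n - 1) / P) := Finset.sum_le_sum hub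
      _ = (P - L) * (2 * ((n - 1) / P)) := by
        rw [Finset.sum_const, Nat.card_Ioc, smul_eq_mul]
  have hfin : (P - L) * (2 * ((n - 1) / P)) ≤ 2 * (n - 1) := by
    have hd : (n - 1) / P * P ≤ n - 1 := Nat.div_mul_le_self _ _
    calc (P - L) * (2 * ((n - 1) / P)) ≤ P * (2 * ((n - 1) / P)) :=
          Nat.mul_le_mul_right _ (by omega)
      _ = 2 * ((n - 1) / P * P) := by ring
      _ ≤ 2 * (n - 1) := by omega
  omega

/-! ### Hilbert cubes in dense finite sets -/

theorem sum_fin_succ_split {j : ℕ} (g : Fin (j + 1) → ℕ) (I : Finset (Fin (j + 1))) :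
    ∑ i ∈ I, g i = (if 0 ∈ I then g 0 else 0)
      + ∑ i' ∈ I.preimage Fin.succ (Fin.succ_injective j).injOn, g i'.succ := by
  classical
  rw [← Finset.sum_filter_add_sum_filter_not I (· = 0) g]
  congr 1
  · rw [Finset.filter_eq']
    split_ifs with h0
    · rw [Finset.sum_singleton]
    · rw [Finset.sum_empty]
  · have hpre : I.preimage Fin.succ (Fin.succ_injective j).injOn
        = (I.filter fun i => ¬i = 0).preimage Fin.succ (Fin.succ_injective j).injOn := by
      ext x
      simp [Finset.mem_preimage, Finset.mem_filter, Fin.succ_ne_zero]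
    rw [hpre, Finset.sum_preimage Fin.succ (I.filter fun i => ¬i = 0)
      (Fin.succ_injective j).injOn g ?_]
    intro x hx hrange
    rw [Finset.mem_filter] at hx
    exfalso
    apply hrange
    rcases Fin.eq_zero_or_eq_succ x with h | ⟨y, hy⟩
    · exact absurd h hx.2
    · exact ⟨y, hy.symm⟩

theorem fin_cube (j : ℕ) : ∀ M L : ℕ, 1 ≤ M → ∃ Nmin : ℕ, ∀ n, Nmin ≤ n →
    ∀ B : Finset ℕ, B ⊆ Finset.Icc 1 n → n ≤ B.card * M →
    ∃ (a : ℕ) (d : Fin j → ℕ),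
      (∀ I : Finset (Fin j), a + ∑ i ∈ I, d i ∈ B) ∧
      (∀ i : Fin j, L + ∑ i' ∈ univ.filter (· < i), d i' < d i) := by
  induction j with
  | zero =>
    intro M L hM
    refine ⟨M, fun n hn B hB hcard => ?_⟩
    have hBne : B.Nonempty := by
      rw [← Finset.card_pos]
      by_contra h
      push_neg at h
      have hc0 : B.card = 0 := by omega
      rw [hc0] at hcard
      simp at hcard
      omega
    obtain ⟨a, ha⟩ := hBne
    refine ⟨a, Fin.elim0, fun I => ?_, fun i => i.elim0⟩
    have hI : I = ∅ := Finset.eq_empty_of_forall_notMem (fun x _ => x.elim0)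
    rw [hI]
    simpa using ha
  | succ j ih =>
    intro M L hM
    set P := M ^ 2 * (4 * L + 8) with hP
    have hM2 : 1 ≤ M ^ 2 := Nat.one_le_pow _ _ hM
    have hPpos : 0 < P := by
      have : 1 * 1 ≤ M ^ 2 * (4 * L + 8) := Nat.mul_le_mul hM2 (by omega)
      omega
    obtain ⟨Nmin', hNmin'⟩ := ih P (L + P) hPpos
    refine ⟨Nmin' + 4 * P * M, fun n hn B hB hcard => ?_⟩
    obtain ⟨d0, hd0L, hd0P, hd0cnt⟩ := pop M L n hM B hB hcard (by rw [← hP]; omega)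
    have hB'sub : (B.filter fun x => x + d0 ∈ B) ⊆ Finset.Icc 1 n :=
      fun x hx => hB (Finset.mem_filter.1 hx).1
    obtain ⟨a, d', hcube', hgrow'⟩ := hNmin' n (by omega) _ hB'sub hd0cnt
    refine ⟨a, Fin.cons d0 d', ?_, ?_⟩
    · intro I
      have hsplit := sum_fin_succ_split (Fin.cons d0 d') I
      have hc' := hcube' (I.preimage Fin.succ (Fin.succ_injective _).injOn)
      rw [Finset.mem_filter] at hc'
      have hsum_eq : ∑ i' ∈ I.preimage Fin.succ (Fin.succ_injective _).injOn,
          (Fin.cons d0 d' : Fin (j + 1) → ℕ) i'.succ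
          = ∑ i' ∈ I.preimage Fin.succ (Fin.succ_injective _).injOn, d' i' :=
        Finset.sum_congr rfl (fun i _ => by rw [Fin.cons_succ])
      rw [hsplit, hsum_eq]
      by_cases h0 : 0 ∈ I
      · rw [if_pos h0, Fin.cons_zero]
        have h2 := hc'.2
        have heq : a + (d0 + ∑ i' ∈ I.preimage Fin.succ (Fin.succ_injective _).injOn, d' i')
            = a + ∑ i' ∈ I.preimage Fin.succ (Fin.succ_injective _).injOn, d' i' + d0 := by
          ring
        rw [heq]
        exact h2
      · rw [if_neg h0]
        have h1 := hc'.1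
        simpa using h1
    · intro i
      refine Fin.cases ?_ ?_ i
      · have hempty : univ.filter (· < (0 : Fin (j + 1))) = ∅ := by
          ext x
          simp
        rw [hempty]
        simpa using hd0L
      · intro i'
        have hgrow := hgrow' i'
        have hsplit := sum_fin_succ_split (Fin.cons d0 d') (univ.filter (· < i'.succ))
        have hpre : (univ.filter (· < Fin.succ i')).preimage Fin.succ
            (Fin.succ_injective _).injOn = univ.filter (· < i') := by
          ext x
          simp [Finset.mem_preimage, Fin.succ_lt_succ_iff]
        have h0mem : (0 : Fin (j + 1)) ∈ univ.filter (· < Fin.succ i') := by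
          simp only [Finset.mem_filter, Finset.mem_univ, true_and]
          exact Fin.succ_pos i'
        rw [Fin.cons_succ, hsplit, hpre, if_pos h0mem, Fin.cons_zero]
        have hsum_eq : ∑ i'' ∈ univ.filter (· < i'),
            (Fin.cons d0 d' : Fin (j + 1) → ℕ) i''.succ
            = ∑ i'' ∈ univ.filter (· < i'), d' i'' :=
          Finset.sum_congr rfl (fun i _ => by rw [Fin.cons_succ])
        rw [hsum_eq]
        omega

/-! ### Hilbert cubes from upper density -/

theorem density_cube (A : Set ℕ) (δ : ℝ) (hδ : 0 < δ)
    (hA : δ ≤ Filter.limsup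
      (fun n : ℕ => (Nat.card ↥(A ∩ Set.Icc 1 n) : ℝ) / n) Filter.atTop) (N : ℕ) :
    ∃ (a : ℕ) (d : Fin N → ℕ), 1 ≤ a ∧ (∀ i, 1 ≤ d i) ∧
      (∀ I : Finset (Fin N), a + ∑ i ∈ I, d i ∈ A) ∧
      Function.Injective (fun I : Finset (Fin N) => ∑ i ∈ I, d i) := by
  classical
  set M0 := ⌈2 / δ⌉₊ + 1 with hM0
  have hM0pos : 1 ≤ M0 := by omega
  obtain ⟨Nmin, hNmin⟩ := fin_cube N M0 0 hM0pos
  have hcob : Filter.IsCoboundedUnder (· ≤ ·) Filter.atTop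
      (fun n : ℕ => (Nat.card ↥(A ∩ Set.Icc 1 n) : ℝ) / n) := by
    apply Filter.IsCoboundedUnder.of_frequently_ge (a := 0)
    apply Filter.Frequently.of_forall
    intro n
    positivity
  have hfreq : ∃ᶠ n in Filter.atTop,
      δ / 2 < (Nat.card ↥(A ∩ Set.Icc 1 n) : ℝ) / n :=
    Filter.frequently_lt_of_lt_limsup hcob (lt_of_lt_of_le (by linarith) hA)
  obtain ⟨n, hn, hn_ge⟩ :=
    (hfreq.and_eventually (Filter.eventually_ge_atTop (Nmin + 1))).exists
  have hn1 : 1 ≤ n := by omega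
  set Bfin := (Finset.Icc 1 n).filter (· ∈ A) with hBfin
  have hfin : (A ∩ Set.Icc 1 n).Finite :=
    Set.Finite.inter_of_right (Set.finite_Icc 1 n) A
  have hcardeq : Nat.card ↥(A ∩ Set.Icc 1 n) = Bfin.card := by
    rw [Nat.card_eq_card_finite_toFinset hfin]
    congr 1
    ext x
    simp only [Set.Finite.mem_toFinset, Set.mem_inter_iff, Set.mem_Icc, hBfin,
      Finset.mem_filter, Finset.mem_Icc]
    tauto
  rw [hcardeq] at hn
  have hcard : n ≤ Bfin.card * M0 := by
    have hnR : (0 : ℝ) < n := by exact_mod_cast hn1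
    have h1 : δ * n < 2 * Bfin.card := by
      rw [div_lt_div_iff₀ (by norm_num) hnR] at hn
      linarith
    have h2 : 2 / δ ≤ (M0 : ℝ) := by
      have := Nat.le_ceil (2 / δ)
      have hle : (⌈2 / δ⌉₊ : ℝ) ≤ (M0 : ℝ) := by
        rw [hM0]
        push_cast
        linarith
      linarith
    have h3 : 2 ≤ δ * M0 := by
      rw [div_le_iff₀ hδ] at h2
      linarith
    have : (n : ℝ) ≤ (Bfin.card : ℝ) * M0 := by
      nlinarith [Nat.cast_nonneg (α := ℝ) Bfin.card]
    exact_mod_cast this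
  obtain ⟨a, d, hcube, hgrow⟩ := hNmin n (by omega) Bfin
    (Finset.filter_subset _ _) hcard
  have hmem : ∀ x ∈ Bfin, 1 ≤ x ∧ x ∈ A := by
    intro x hx
    rw [hBfin, Finset.mem_filter, Finset.mem_Icc] at hx
    exact ⟨hx.1.1, hx.2⟩
  refine ⟨a, d, ?_, ?_, ?_, ?_⟩
  · have := hcube ∅
    simp only [Finset.sum_empty, add_zero] at this
    exact (hmem a this).1
  · intro i
    have := hgrow i
    omega
  · intro I
    exact (hmem _ (hcube I)).2
  · apply inj_of_superincr
    intro i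
    have := hgrow i
    omega

/-! ### Points of a signed cube structure -/

def pt {N S : ℕ} (F : Finset (Fin N)) (Bp Bm : Fin S → Finset (Fin N))
    (ε : Fin S → Bool) : Finset (Fin N) :=
  F ∪ univ.biUnion fun j => if ε j then Bp j else Bm j

/-! ### Phase A : colors of pairs of cube points depend only on the data
  below the least split coordinate -/

theorem phaseA (S : ℕ) : ∀ (γ : Type) [Finite γ],
    ∃ N : ℕ, ∀ κ : Finset (Fin N) → Finset (Fin N) → γ, (∀ X Y, κ X Y = κ Y X) →
    ∃ (F : Finset (Fin N)) (Bp Bm : Fin S → Finset (Fin N))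
      (c : Fin S → (Fin S → Bool) → γ),
      (∀ j, (Bp j).Nonempty) ∧
      (∀ j, Disjoint F (Bp j)) ∧ (∀ j, Disjoint F (Bm j)) ∧
      (∀ j, Disjoint (Bp j) (Bm j)) ∧
      (∀ j j', j ≠ j' → Disjoint (Bp j ∪ Bm j) (Bp j' ∪ Bm j')) ∧
      (∀ (ε ε' : Fin S → Bool) (m : Fin S),
        (∀ i, i < m → ε i = ε' i) → ε m ≠ ε' m →
        κ (pt F Bp Bm ε) (pt F Bp Bm ε') = c m ε) ∧
      (∀ (m : Fin S) (ε ε' : Fin S → Bool),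
        (∀ i, i < m → ε i = ε' i) → c m ε = c m ε') := by
  induction S with
  | zero =>
    intro γ _
    exact ⟨0, fun κ hsym => ⟨∅, (fun j => j.elim0), (fun j => j.elim0),
      (fun m => m.elim0), (fun j => j.elim0), (fun j => j.elim0), (fun j => j.elim0),
      (fun j => j.elim0), (fun j j' _ => j.elim0), (fun _ _ m => m.elim0),
      (fun m => m.elim0)⟩⟩
  | succ S ih =>
    intro γ _
    obtain ⟨N', hN'⟩ := ih (γ × γ)
    obtain ⟨n, hn⟩ := Combinatorics.Subspace.exists_mono_in_high_dimension_fin HL γ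
      (Option (Fin N'))
    refine ⟨n, fun κ hsym => ?_⟩
    classical
    set Xset : (Fin n → HL) → Finset (Fin n) :=
      fun u => univ.filter (fun i => u i = HL.b ∨ u i = HL.l) with hXset
    set Yset : (Fin n → HL) → Finset (Fin n) :=
      fun u => univ.filter (fun i => u i = HL.b ∨ u i = HL.r) with hYset
    obtain ⟨l, c1, hc1⟩ := hn (fun u => κ (Xset u) (Yset u))
    set Fb : Finset (Fin n) := univ.filter (fun i => l.idxFun i = Sum.inl HL.b) with hFb
    set Jl : Finset (Fin n) := univ.filter (fun i => l.idxFun i = Sum.inl HL.l) with hJl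
    set Jr : Finset (Fin n) := univ.filter (fun i => l.idxFun i = Sum.inl HL.r) with hJr
    set Wn : Finset (Fin n) := univ.filter (fun i => l.idxFun i = Sum.inr none) with hWn
    set tr : Finset (Fin N') → Finset (Fin n) :=
      fun X => univ.filter (fun i => ∃ g ∈ X, l.idxFun i = Sum.inr (some g)) with htr
    have mem_tr : ∀ (i : Fin n) (X : Finset (Fin N')),
        i ∈ tr X ↔ ∃ g ∈ X, l.idxFun i = Sum.inr (some g) := by
      intro i X
      rw [htr]
      simp
    -- the inner coloring
    set κ' : Finset (Fin N') → Finset (Fin N') → γ × γ := fun X Y =>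
      (κ (Fb ∪ (Jl ∪ Wn) ∪ tr X) (Fb ∪ (Jl ∪ Wn) ∪ tr Y), κ (Fb ∪ Jr ∪ tr X) (Fb ∪ Jr ∪ tr Y))
      with hκ'
    have hsym' : ∀ X Y, κ' X Y = κ' Y X := by
      intro X Y
      rw [hκ']
      simp only
      rw [hsym (Fb ∪ (Jl ∪ Wn) ∪ tr X), hsym (Fb ∪ Jr ∪ tr X)]
    obtain ⟨F', Bp', Bm', c', hne', hdFp', hdFm', hdpm', hdjj', hmain', hdep'⟩ :=
      hN' κ' hsym'
    -- assembled structure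
    set F : Finset (Fin n) := Fb ∪ tr F' with hF
    set Bp : Fin (S + 1) → Finset (Fin n) :=
      fun j => Fin.cases (Jl ∪ Wn) (fun j' => tr (Bp' j')) j with hBp
    set Bm : Fin (S + 1) → Finset (Fin n) :=
      fun j => Fin.cases Jr (fun j' => tr (Bm' j')) j with hBm
    set c : Fin (S + 1) → (Fin (S + 1) → Bool) → γ :=
      fun m => Fin.cases (motive := fun _ => (Fin (S + 1) → Bool) → γ)
        (fun _ => c1)
        (fun m' ε => if ε 0 then (c' m' (ε ∘ Fin.succ)).1 else (c' m' (ε ∘ Fin.succ)).2)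
        m with hc
    have hBp0 : Bp 0 = (Jl ∪ Wn) := by rw [hBp]; simp
    have hBm0 : Bm 0 = Jr := by rw [hBm]; simp
    have hBps : ∀ j' : Fin S, Bp j'.succ = tr (Bp' j') := by
      intro j'
      rw [hBp]
      simp
    have hBms : ∀ j' : Fin S, Bm j'.succ = tr (Bm' j') := by
      intro j'
      rw [hBm]
      simp
    have hc0eq : ∀ ε, c 0 ε = c1 := by
      intro ε
      rw [hc]
      simp
    have hcseq : ∀ (m' : Fin S) ε, c m'.succ ε
        = if ε 0 then (c' m' (ε ∘ Fin.succ)).1 else (c' m' (ε ∘ Fin.succ)).2 := by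
      intro m' ε
      rw [hc]
      simp
    -- basic disjointness helpers
    have htr_disj : ∀ X Y, Disjoint X Y → Disjoint (tr X) (tr Y) := by
      intro X Y hXY
      rw [Finset.disjoint_left]
      intro i hiX hiY
      rw [mem_tr] at hiX hiY
      obtain ⟨g, hgX, hg⟩ := hiX
      obtain ⟨g', hgY, hg'⟩ := hiY
      rw [hg] at hg'
      have : g = g' := by
        have h1 := Sum.inr.inj hg'
        exact Option.some.inj h1
      rw [this] at hgX
      exact (Finset.disjoint_left.1 hXY) hgX hgY
    have htr_ne : ∀ X, X.Nonempty → (tr X).Nonempty := by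
      intro X ⟨g, hg⟩
      obtain ⟨i, hi⟩ := l.proper (some g)
      exact ⟨i, by rw [mem_tr]; exact ⟨g, hg, hi⟩⟩
    have hd_fix_tr : ∀ (v : HL) X,
        Disjoint (univ.filter (fun i => l.idxFun i = Sum.inl v)) (tr X) := by
      intro v X
      rw [Finset.disjoint_left]
      intro i hi hiX
      rw [Finset.mem_filter] at hi
      rw [mem_tr] at hiX
      obtain ⟨g, _, hg⟩ := hiX
      rw [hi.2] at hg
      exact absurd hg (by simp)
    have hd_Wn_tr : ∀ X, Disjoint Wn (tr X) := by
      intro X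
      rw [Finset.disjoint_left]
      intro i hi hiX
      rw [hWn, Finset.mem_filter] at hi
      rw [mem_tr] at hiX
      obtain ⟨g, _, hg⟩ := hiX
      rw [hi.2] at hg
      exact absurd hg (by simp)
    have hd_fix_fix : ∀ (v v' : HL), v ≠ v' →
        Disjoint (univ.filter (fun i => l.idxFun i = Sum.inl v))
          (univ.filter (fun i => l.idxFun i = Sum.inl v')) := by
      intro v v' hvv
      rw [Finset.disjoint_left]
      intro i hi hi'
      rw [Finset.mem_filter] at hi hi'
      rw [hi.2] at hi'
      exact hvv (Sum.inl.inj hi'.2)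
    have hd_fix_Wn : ∀ (v : HL),
        Disjoint (univ.filter (fun i => l.idxFun i = Sum.inl v)) Wn := by
      intro v
      rw [Finset.disjoint_left]
      intro i hi hi'
      rw [Finset.mem_filter] at hi
      rw [hWn, Finset.mem_filter] at hi'
      rw [hi.2] at hi'
      exact absurd hi'.2 (by simp)
    -- the key point decomposition
    have hpt : ∀ ε : Fin (S + 1) → Bool,
        pt F Bp Bm ε
          = Fb ∪ (if ε 0 then (Jl ∪ Wn) else Jr) ∪ tr (pt F' Bp' Bm' (ε ∘ Fin.succ)) := by
      intro ε
      have fact : ∀ (i : Fin n) (j' : Fin S),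
          (i ∈ if ε j'.succ then Bp j'.succ else Bm j'.succ)
            ↔ ∃ g ∈ (if (ε ∘ Fin.succ) j' then Bp' j' else Bm' j'),
                l.idxFun i = Sum.inr (some g) := by
        intro i j'
        cases hcε : ε j'.succ <;>
          simp [hcε, Function.comp_apply, hBps, hBms, mem_tr]
      have fact0 : ∀ i : Fin n,
          (i ∈ if ε 0 then Bp 0 else Bm 0) ↔ i ∈ (if ε 0 then (Jl ∪ Wn) else Jr) := by
        intro i
        cases hcε : ε 0 <;> simp [hcε, hBp0, hBm0]
      ext i
      simp only [pt, hF, Finset.mem_union, Finset.mem_biUnion, Finset.mem_univ,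
        true_and, mem_tr]
      constructor
      · rintro ((hFb1 | hF'1) | ⟨j, hj⟩)
        · exact Or.inl (Or.inl hFb1)
        · obtain ⟨g, hgF', hg⟩ := hF'1
          exact Or.inr ⟨g, Or.inl hgF', hg⟩
        · rcases Fin.eq_zero_or_eq_succ j with hj0 | ⟨j', hjs⟩
          · rw [hj0] at hj
            rw [fact0 i] at hj
            exact Or.inl (Or.inr hj)
          · rw [hjs] at hj
            rw [fact i j'] at hj
            obtain ⟨g, hgB, hg⟩ := hj
            exact Or.inr ⟨g, Or.inr ⟨j', hgB⟩, hg⟩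
      · rintro ((hFb1 | hite) | ⟨g, hgpt, hg⟩)
        · exact Or.inl (Or.inl hFb1)
        · refine Or.inr ⟨0, ?_⟩
          rw [fact0 i]
          exact hite
        · rcases hgpt with hgF' | ⟨j', hgB⟩
          · exact Or.inl (Or.inr ⟨g, hgF', hg⟩)
          · refine Or.inr ⟨j'.succ, ?_⟩
            rw [fact i j']
            exact ⟨g, hgB, hg⟩
    -- the monochromatic split lemma
    have hsplit0 : ∀ P Q : Finset (Fin N'),
        κ (Fb ∪ (Jl ∪ Wn) ∪ tr P) (Fb ∪ Jr ∪ tr Q) = c1 := by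
      intro P Q
      set wa : Option (Fin N') → HL := fun o => match o with
        | none => HL.l
        | some g => if g ∈ P then (if g ∈ Q then HL.b else HL.l)
                    else (if g ∈ Q then HL.r else HL.z) with hwa
      have hwan : wa none = HL.l := by rw [hwa]
      have hwas : ∀ g, wa (some g) = if g ∈ P then (if g ∈ Q then HL.b else HL.l)
          else (if g ∈ Q then HL.r else HL.z) := by
        intro g
        rw [hwa]
      have hkey : κ (Xset (l.toFun wa)) (Yset (l.toFun wa)) = c1 := hc1 wa
      have hXeq : Xset (l.toFun wa) = Fb ∪ (Jl ∪ Wn) ∪ tr P := by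
        ext i
        rw [hXset]
        simp only [Finset.mem_filter, Finset.mem_univ, true_and]
        rcases hcase : l.idxFun i with v | o
        · rw [Combinatorics.Subspace.apply_inl hcase]
          cases v <;>
            simp [hcase, hFb, hJl, hJr, hWn, mem_tr, Finset.mem_union]
        · rw [Combinatorics.Subspace.apply_inr hcase]
          cases o with
          | none =>
            rw [hwan]
            simp [hcase, hFb, hJl, hJr, hWn, mem_tr, Finset.mem_union]
          | some g =>
            rw [hwas g]
            by_cases hgP : g ∈ P <;> by_cases hgQ : g ∈ Q <;>
              simp [hcase, hgP, hgQ, hFb, hJl, hJr, hWn, mem_tr,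
                Finset.mem_union]
      have hYeq : Yset (l.toFun wa) = Fb ∪ Jr ∪ tr Q := by
        ext i
        rw [hYset]
        simp only [Finset.mem_filter, Finset.mem_univ, true_and]
        rcases hcase : l.idxFun i with v | o
        · rw [Combinatorics.Subspace.apply_inl hcase]
          cases v <;>
            simp [hcase, hFb, hJl, hJr, hWn, mem_tr, Finset.mem_union]
        · rw [Combinatorics.Subspace.apply_inr hcase]
          cases o with
          | none =>
            rw [hwan]
            simp [hcase, hFb, hJl, hJr, hWn, mem_tr, Finset.mem_union]
          | some g =>
            rw [hwas g]
            by_cases hgP : g ∈ P <;> by_cases hgQ : g ∈ Q <;>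
              simp [hcase, hgP, hgQ, hFb, hJl, hJr, hWn, mem_tr,
                Finset.mem_union]
      rw [hXeq, hYeq] at hkey
      exact hkey
    refine ⟨F, Bp, Bm, c, ?_, ?_, ?_, ?_, ?_, ?_, ?_⟩
    · -- nonempty
      intro j
      rcases Fin.eq_zero_or_eq_succ j with hj0 | ⟨j', hjs⟩
      · rw [hj0, hBp0]
        obtain ⟨i, hi⟩ := l.proper none
        refine ⟨i, Finset.mem_union_right _ ?_⟩
        rw [hWn, Finset.mem_filter]
        exact ⟨Finset.mem_univ _, hi⟩
      · rw [hjs, hBps j']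
        exact htr_ne _ (hne' j')
    · -- Disjoint F (Bp j)
      intro j
      rw [hF]
      rcases Fin.eq_zero_or_eq_succ j with hj0 | ⟨j', hjs⟩
      · rw [hj0, hBp0]
        rw [Finset.disjoint_union_left, Finset.disjoint_union_right,
          Finset.disjoint_union_right]
        rw [hFb, hJl, hWn]
        exact ⟨⟨hd_fix_fix _ _ (by simp), hd_fix_Wn _⟩,
          ⟨(hd_fix_tr HL.l F').symm, (hd_Wn_tr F').symm⟩⟩
      · rw [hjs, hBps j']
        rw [Finset.disjoint_union_left]
        rw [hFb]
        exact ⟨hd_fix_tr _ _, htr_disj _ _ (hdFp' j')⟩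
    · -- Disjoint F (Bm j)
      intro j
      rw [hF]
      rcases Fin.eq_zero_or_eq_succ j with hj0 | ⟨j', hjs⟩
      · rw [hj0, hBm0]
        rw [Finset.disjoint_union_left]
        rw [hFb, hJr]
        exact ⟨hd_fix_fix _ _ (by simp), (hd_fix_tr HL.r F').symm⟩
      · rw [hjs, hBms j']
        rw [Finset.disjoint_union_left]
        rw [hFb]
        exact ⟨hd_fix_tr _ _, htr_disj _ _ (hdFm' j')⟩
    · -- Disjoint (Bp j) (Bm j)
      intro j
      rcases Fin.eq_zero_or_eq_succ j with hj0 | ⟨j', hjs⟩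
      · rw [hj0, hBp0, hBm0]
        rw [Finset.disjoint_union_left]
        rw [hJl, hJr, hWn]
        exact ⟨hd_fix_fix _ _ (by simp), (hd_fix_Wn HL.r).symm⟩
      · rw [hjs, hBps j', hBms j']
        exact htr_disj _ _ (hdpm' j')
    · -- cross disjointness
      intro j j' hjj
      have haux : ∀ u : Fin (S + 1), Bp u ∪ Bm u
          = Fin.cases ((Jl ∪ Wn) ∪ Jr) (fun u' => tr (Bp' u' ∪ Bm' u')) u := by
        intro u
        rcases Fin.eq_zero_or_eq_succ u with hu0 | ⟨u', hus⟩
        · rw [hu0, hBp0, hBm0]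
          simp
        · rw [hus, hBps u', hBms u']
          simp only [Fin.cases_succ]
          ext i
          simp only [Finset.mem_union, mem_tr]
          constructor
          · rintro (⟨g, hgB, hg⟩ | ⟨g, hgB, hg⟩)
            · exact ⟨g, Or.inl hgB, hg⟩
            · exact ⟨g, Or.inr hgB, hg⟩
          · rintro ⟨g, hgB | hgB, hg⟩
            · exact Or.inl ⟨g, hgB, hg⟩
            · exact Or.inr ⟨g, hgB, hg⟩
      rw [haux j, haux j']
      rcases Fin.eq_zero_or_eq_succ j with hj0 | ⟨j0, hjs⟩ <;>
        rcases Fin.eq_zero_or_eq_succ j' with hj0' | ⟨j0', hjs'⟩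
      · exact absurd (hj0.trans hj0'.symm) hjj
      · rw [hj0, hjs']
        simp only [Fin.cases_zero, Fin.cases_succ]
        rw [Finset.disjoint_union_left, Finset.disjoint_union_left]
        rw [hJl, hJr, hWn]
        exact ⟨⟨hd_fix_tr _ _, hd_Wn_tr _⟩, hd_fix_tr _ _⟩
      · rw [hjs, hj0']
        simp only [Fin.cases_zero, Fin.cases_succ]
        rw [Finset.disjoint_union_right, Finset.disjoint_union_right]
        rw [hJl, hJr, hWn]
        exact ⟨⟨(hd_fix_tr _ _).symm, (hd_Wn_tr _).symm⟩, (hd_fix_tr _ _).symm⟩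
      · rw [hjs, hjs']
        simp only [Fin.cases_succ]
        apply htr_disj
        have : j0 ≠ j0' := by
          intro hc
          rw [hc] at hjs
          exact hjj (hjs.trans hjs'.symm)
        exact hdjj' j0 j0' this
    · -- the main equality
      intro ε ε' m hlt hne
      rcases Fin.eq_zero_or_eq_succ m with hm0 | ⟨m', hms⟩
      · rw [hm0] at hne
        rw [hpt ε, hpt ε', hm0, hc0eq]
        rcases Bool.eq_false_or_eq_true (ε 0) with hb | hb <;>
          rcases Bool.eq_false_or_eq_true (ε' 0) with hb' | hb'
        · rw [hb, hb'] at hne; exact absurd rfl hne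
        · rw [hb, hb']
          rw [if_pos rfl, if_neg (by simp)]
          exact hsplit0 _ _
        · rw [hb, hb']
          rw [if_neg (by simp), if_pos rfl]
          rw [hsym]
          exact hsplit0 _ _
        · rw [hb, hb'] at hne; exact absurd rfl hne
      · have hε0 : ε 0 = ε' 0 := hlt 0 (by rw [hms]; exact Fin.succ_pos m')
        have hltin : ∀ i : Fin S, i < m' → (ε ∘ Fin.succ) i = (ε' ∘ Fin.succ) i := by
          intro i hi
          apply hlt
          rw [hms]
          exact Fin.succ_lt_succ_iff.2 hi
        have hnein : (ε ∘ Fin.succ) m' ≠ (ε' ∘ Fin.succ) m' := by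
          rw [hms] at hne
          exact hne
        have hinner := hmain' (ε ∘ Fin.succ) (ε' ∘ Fin.succ) m' hltin hnein
        rw [hpt ε, hpt ε', hms, hcseq]
        rcases Bool.eq_false_or_eq_true (ε 0) with hb | hb
        · rw [hb, ← hε0, hb]
          simp only [eq_self_iff_true, if_true]
          have := congrArg Prod.fst hinner
          rw [hκ'] at this
          exact this
        · rw [hb, ← hε0, hb]
          simp only [Bool.false_eq_true, if_false]
          have := congrArg Prod.snd hinner
          rw [hκ'] at this
          exact this
    · -- dependence of c on prefixes
      intro m ε ε' hagree
      rcases Fin.eq_zero_or_eq_succ m with hm0 | ⟨m', hms⟩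
      · rw [hm0, hc0eq, hc0eq]
      · rw [hms, hcseq, hcseq]
        have hε0 : ε 0 = ε' 0 := hagree 0 (by rw [hms]; exact Fin.succ_pos m')
        have hin := hdep' m' (ε ∘ Fin.succ) (ε' ∘ Fin.succ) (by
          intro i hi
          apply hagree
          rw [hms]
          exact Fin.succ_lt_succ_iff.2 hi)
        rw [hε0, hin]

/-! ### Phase B : equalising the least-split colors (tree Graham–Rothschild) -/

theorem elim_map_succ {S : ℕ} {β : Type} (o : Option (Fin S)) (b : β)
    (δ : Fin (S + 1) → β) :
    (o.map Fin.succ).elim b δ = o.elim b (δ ∘ Fin.succ) := by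
  cases o <;> rfl

theorem tgr (γ : Type) [Finite γ] (S : ℕ) :
    ∃ T : ℕ, ∀ θ : Fin T → (Fin T → Bool) → γ,
    (∀ (m : Fin T) (ε ε' : Fin T → Bool), (∀ i, i < m → ε i = ε' i) → θ m ε = θ m ε') →
    ∃ (lab : Fin T → Option (Fin S)) (f : Fin T → Bool) (mt : Fin S → Fin T)
      (η : Fin S → γ),
      (∀ t, lab (mt t) = some t) ∧
      (∀ t i, lab i = some t → mt t ≤ i) ∧
      (∀ s t i j, lab i = some s → lab j = some t → s < t → i < j) ∧
      (∀ (δ : Fin S → Bool) (t : Fin S),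
        θ (mt t) (fun x => (lab x).elim (f x) δ) = η t) := by
  induction S with
  | zero =>
    exact ⟨0, fun θ _ => ⟨fun _ => none, fun _ => true, Fin.elim0, Fin.elim0,
      fun t => t.elim0, fun t => t.elim0, fun s _ _ _ _ _ _ => s.elim0,
      fun _ t => t.elim0⟩⟩
  | succ S ih =>
    obtain ⟨T', hT'⟩ := ih
    obtain ⟨n, hn⟩ := Combinatorics.Subspace.exists_mono_in_high_dimension_fin Bool
      (Fin T' → (Fin T' → Bool) → γ) Unit
    refine ⟨n + T', fun θ hdep => ?_⟩
    set Col : (Fin n → Bool) → (Fin T' → (Fin T' → Bool) → γ) :=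
      fun v m p => θ ⟨n + (m : ℕ), by have := m.isLt; omega⟩
        (fun x => if h : (x : ℕ) < n then v ⟨(x : ℕ), h⟩
          else p ⟨(x : ℕ) - n, by have := x.isLt; omega⟩) with hCol
    obtain ⟨l, c0, hc0⟩ := hn Col
    set Act : Finset (Fin n) := univ.filter (fun i => l.idxFun i = Sum.inr ()) with hAct
    have hActne : Act.Nonempty := by
      obtain ⟨i, hi⟩ := l.proper ()
      exact ⟨i, by rw [hAct, Finset.mem_filter]; exact ⟨Finset.mem_univ _, hi⟩⟩
    set i0 := Act.min' hActne with hi0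
    have hi0mem : i0 ∈ Act := Act.min'_mem hActne
    have hi0act : l.idxFun i0 = Sum.inr () := by
      rw [hAct, Finset.mem_filter] at hi0mem
      exact hi0mem.2
    have hdep0 : ∀ (m : Fin T') (p p' : Fin T' → Bool),
        (∀ i, i < m → p i = p' i) → c0 m p = c0 m p' := by
      intro m p p' hagree
      have h1 := congrFun (hc0 (fun _ => true)) m
      rw [← congrFun h1 p, ← congrFun h1 p']
      simp only [hCol]
      apply hdep
      intro x hx
      rw [Fin.lt_def] at hx
      simp only [Fin.val_mk] at hx
      by_cases hxn : (x : ℕ) < n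
      · simp only [dif_pos hxn]
      · rw [dif_neg hxn, dif_neg hxn]
        exact hagree _ (by rw [Fin.lt_def]; simp only [Fin.val_mk]; omega)
    obtain ⟨lab', f', mt', η', hmt'1, hmt'2, hord', hmain'⟩ := hT' c0 hdep0
    set lab : Fin (n + T') → Option (Fin (S + 1)) := fun x =>
      if h : (x : ℕ) < n then
        (if l.idxFun ⟨(x : ℕ), h⟩ = Sum.inr () then some 0 else none)
      else (lab' ⟨(x : ℕ) - n, by have := x.isLt; omega⟩).map Fin.succ with hlab
    set f : Fin (n + T') → Bool := fun x =>
      if h : (x : ℕ) < n then Sum.elim id (fun _ => true) (l.idxFun ⟨(x : ℕ), h⟩)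
      else f' ⟨(x : ℕ) - n, by have := x.isLt; omega⟩ with hf
    set mt : Fin (S + 1) → Fin (n + T') :=
      Fin.cases ⟨(i0 : ℕ), by have := i0.isLt; omega⟩
        (fun t => ⟨n + (mt' t : ℕ), by have := (mt' t).isLt; omega⟩) with hmt
    set η : Fin (S + 1) → γ := Fin.cases (θ (mt 0) f) η' with hη
    have hlab_lt : ∀ (x : Fin (n + T')) (hx : (x : ℕ) < n),
        lab x = if l.idxFun ⟨(x : ℕ), hx⟩ = Sum.inr () then some 0 else none := by
      intro x hx
      rw [hlab]
      exact dif_pos hx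
    have hlab_ge : ∀ (x : Fin (n + T')) (x' : Fin T'), (x : ℕ) = n + (x' : ℕ) →
        lab x = (lab' x').map Fin.succ := by
      intro x x' he
      rw [hlab]
      have hxge : ¬ (x : ℕ) < n := by omega
      simp only
      rw [dif_neg hxge]
      congr 2
      apply Fin.ext
      simp only [Fin.val_mk]
      omega
    have hf_ge : ∀ (x : Fin (n + T')) (x' : Fin T'), (x : ℕ) = n + (x' : ℕ) →
        f x = f' x' := by
      intro x x' he
      rw [hf]
      have hxge : ¬ (x : ℕ) < n := by omega
      simp only
      rw [dif_neg hxge]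
      congr 1
      apply Fin.ext
      simp only [Fin.val_mk]
      omega
    have hmtval0 : ((mt 0 : Fin (n + T')) : ℕ) = (i0 : ℕ) := by
      simp [hmt]
    have hmtvalsucc : ∀ t' : Fin S, ((mt t'.succ : Fin (n + T')) : ℕ) = n + (mt' t' : ℕ) := by
      intro t'
      simp [hmt]
    refine ⟨lab, f, mt, η, ?_, ?_, ?_, ?_⟩
    · intro t
      refine Fin.cases ?_ ?_ t
      · have hvlt : ((mt 0 : Fin (n + T')) : ℕ) < n := by
          rw [hmtval0]
          exact i0.isLt
        rw [hlab_lt _ hvlt]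
        have heq : (⟨((mt 0 : Fin (n + T')) : ℕ), hvlt⟩ : Fin n) = i0 := by
          apply Fin.ext
          simp only [Fin.val_mk]
          exact hmtval0
        rw [heq, if_pos hi0act]
      · intro t'
        rw [hlab_ge (mt t'.succ) (mt' t') (hmtvalsucc t')]
        rw [hmt'1 t', Option.map_some]
    · intro t i h
      by_cases hi : (i : ℕ) < n
      · rw [hlab_lt i hi] at h
        by_cases hact : l.idxFun ⟨(i : ℕ), hi⟩ = Sum.inr ()
        · rw [if_pos hact] at h
          have ht : (0 : Fin (S + 1)) = t := Option.some.inj h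
          rw [← ht]
          have hiAct : (⟨(i : ℕ), hi⟩ : Fin n) ∈ Act := by
            rw [hAct, Finset.mem_filter]
            exact ⟨Finset.mem_univ _, hact⟩
          have hle := Act.min'_le _ hiAct
          rw [Fin.le_def] at hle ⊢
          rw [hmtval0]
          simpa using hle
        · rw [if_neg hact] at h
          exact absurd h (by simp)
      · have hxe : (i : ℕ) = n + ((i : ℕ) - n) := by omega
        have hi' : (i : ℕ) - n < T' := by have := i.isLt; omega
        rw [hlab_ge i ⟨(i : ℕ) - n, hi'⟩ hxe] at h
        rw [Option.map_eq_some_iff] at h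
        obtain ⟨t0, ht0, hsucc⟩ := h
        have h2 := hmt'2 t0 _ ht0
        rw [← hsucc]
        rw [Fin.le_def] at h2 ⊢
        rw [hmtvalsucc t0]
        simp only [Fin.val_mk] at h2
        omega
    · intro s t i j hi hj hst
      have lab_low_zero : ∀ (x : Fin (n + T')) (hx : (x : ℕ) < n) (u : Fin (S + 1)),
          lab x = some u → u = 0 := by
        intro x hx u hu
        rw [hlab_lt x hx] at hu
        by_cases hact : l.idxFun ⟨(x : ℕ), hx⟩ = Sum.inr ()
        · rw [if_pos hact] at hu
          exact (Option.some.inj hu).symm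
        · rw [if_neg hact] at hu
          exact absurd hu (by simp)
      by_cases hin : (i : ℕ) < n <;> by_cases hjn : (j : ℕ) < n
      · exfalso
        rw [lab_low_zero i hin s hi, lab_low_zero j hjn t hj] at hst
        exact lt_irrefl _ hst
      · rw [Fin.lt_def]
        omega
      · exfalso
        rw [lab_low_zero j hjn t hj] at hst
        exact Fin.not_lt_zero _ hst
      · have hie : (i : ℕ) = n + ((i : ℕ) - n) := by omega
        have hje : (j : ℕ) = n + ((j : ℕ) - n) := by omega
        have hi' : (i : ℕ) - n < T' := by have := i.isLt; omega
        have hj' : (j : ℕ) - n < T' := by have := j.isLt; omega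
        rw [hlab_ge i ⟨(i : ℕ) - n, hi'⟩ hie] at hi
        rw [hlab_ge j ⟨(j : ℕ) - n, hj'⟩ hje] at hj
        rw [Option.map_eq_some_iff] at hi hj
        obtain ⟨s0, hs0, hs0e⟩ := hi
        obtain ⟨t0, ht0, ht0e⟩ := hj
        have hst0 : s0 < t0 := by
          rw [← hs0e, ← ht0e] at hst
          exact Fin.succ_lt_succ_iff.1 hst
        have hord := hord' s0 t0 _ _ hs0 ht0 hst0
        rw [Fin.lt_def] at hord ⊢
        simp only [Fin.val_mk] at hord
        omega
    · intro δ t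
      refine Fin.cases ?_ ?_ t
      · have hη0 : η 0 = θ (mt 0) f := by
          rw [hη]
          simp
        rw [hη0]
        apply hdep
        intro x hx
        rw [Fin.lt_def] at hx
        rw [hmtval0] at hx
        have hxn : (x : ℕ) < n := lt_of_lt_of_le hx (le_of_lt i0.isLt)
        have hnot : ¬ l.idxFun ⟨(x : ℕ), hxn⟩ = Sum.inr () := by
          intro hact
          have hxAct : (⟨(x : ℕ), hxn⟩ : Fin n) ∈ Act := by
            rw [hAct, Finset.mem_filter]
            exact ⟨Finset.mem_univ _, hact⟩
          have hle := Act.min'_le _ hxAct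
          rw [Fin.le_def] at hle
          simp only [Fin.val_mk] at hle
          omega
        rw [hlab_lt x hxn, if_neg hnot]
        rfl
      · intro t'
        have hηs : η t'.succ = η' t' := by
          rw [hη]
          simp
        rw [hηs]
        have e1 := congrFun (congrFun (hc0 (fun _ => δ 0)) (mt' t'))
          (fun x => (lab' x).elim (f' x) (δ ∘ Fin.succ))
        have e2 := hmain' (δ ∘ Fin.succ) t'
        rw [e2] at e1
        rw [← e1]
        simp only [hCol]
        have hidx : mt t'.succ
            = (⟨n + ((mt' t') : ℕ), by have := (mt' t').isLt; omega⟩ : Fin (n + T')) := by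
          apply Fin.ext
          rw [hmtvalsucc t']
        rw [hidx]
        congr 1
        funext x
        by_cases hxn : (x : ℕ) < n
        · rw [dif_pos hxn]
          rw [hlab_lt x hxn]
          rcases hcase : l.idxFun ⟨(x : ℕ), hxn⟩ with b | u
          · rw [if_neg (by simp [hcase])]
            rw [Combinatorics.Subspace.apply_inl hcase]
            have hfx : f x = b := by
              rw [hf]
              simp only
              rw [dif_pos hxn, hcase]
              rfl
            exact hfx
          · rw [if_pos (by simp [hcase])]
            rw [Combinatorics.Subspace.apply_inr hcase]
            rfl
        · rw [dif_neg hxn]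
          have hxe : (x : ℕ) = n + ((x : ℕ) - n) := by omega
          have hx' : (x : ℕ) - n < T' := by have := x.isLt; omega
          rw [hlab_ge x ⟨(x : ℕ) - n, hx'⟩ hxe, hf_ge x ⟨(x : ℕ) - n, hx'⟩ hxe]
          exact elim_map_succ (lab' ⟨(x : ℕ) - n, hx'⟩) (f' ⟨(x : ℕ) - n, hx'⟩) δ

end ARUD

/-- If `A ⊆ ℕ` has upper density at least `δ > 0`, then every `r`-edge-coloring of the complete
graph on `A` admits a Hilbert cube `H(a; d₁, …, d_k) ⊆ A` (with `a, dᵢ ≥ 1`) whose `2^k`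
elements are distinct and form a monochromatic clique. -/
theorem additive_ramsey_upper_density (δ : ℝ) (hδ : 0 < δ) (r k : ℕ) (hr : 0 < r)
    (hk : 0 < k) (A : Set ℕ)
    (hA : δ ≤ Filter.limsup
      (fun n : ℕ => (Nat.card ↥(A ∩ Set.Icc 1 n) : ℝ) / n) Filter.atTop) :
    ∀ χ : Sym2 ℕ → Fin r,
      ∃ (a : ℕ) (d : Fin k → ℕ),
        1 ≤ a ∧ (∀ i, 1 ≤ d i) ∧
        (∀ I : Finset (Fin k), a + ∑ i ∈ I, d i ∈ A) ∧
        Function.Injective (fun I : Finset (Fin k) => a + ∑ i ∈ I, d i) ∧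
        ∃ c : Fin r, ∀ I J : Finset (Fin k), I ≠ J →
          χ s(a + ∑ i ∈ I, d i, a + ∑ i ∈ J, d i) = c := by
  intro χ
  classical
  open Finset in
  set S0 := r * (k - 1) + 1 with hS0
  obtain ⟨T, hT⟩ := ARUD.tgr (Fin r) S0
  obtain ⟨N, hN⟩ := ARUD.phaseA T (Fin r)
  obtain ⟨a0, d0, ha0, hd0, hcube, hinj⟩ := ARUD.density_cube A δ hδ hA N
  set num : Finset (Fin N) → ℕ := fun X => a0 + ∑ i ∈ X, d0 i with hnum
  have hnuminj : Function.Injective num := by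
    intro X Y hXY
    apply hinj
    rw [hnum] at hXY
    simp only [add_right_inj] at hXY
    exact hXY
  set κ : Finset (Fin N) → Finset (Fin N) → Fin r :=
    fun X Y => χ s(num X, num Y) with hκ
  have hsym : ∀ X Y, κ X Y = κ Y X := by
    intro X Y
    rw [hκ]
    simp only
    rw [Sym2.eq_swap]
  obtain ⟨F, Bp, Bm, c, hne, hdFp, hdFm, hdpm, hdjj, hmain, hdep⟩ := hN κ hsym
  obtain ⟨lab, f, mt, η, hlabmt, hmtmin, hord, htheta⟩ := hT c hdep
  -- pigeonhole : some color has at least k classes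
  have hpigeon : ∃ c0 : Fin r, k ≤ (univ.filter (fun s => η s = c0)).card := by
    by_contra hcon
    push_neg at hcon
    have hsum := Finset.card_eq_sum_card_fiberwise
      (f := η) (s := (univ : Finset (Fin S0))) (t := univ) (fun x _ => mem_univ _)
    have hle : (univ : Finset (Fin S0)).card ≤ (univ : Finset (Fin r)).card * (k - 1) := by
      rw [hsum]
      calc ∑ c0 ∈ univ, (univ.filter (fun s => η s = c0)).card
          ≤ ∑ _c0 ∈ (univ : Finset (Fin r)), (k - 1) :=
            Finset.sum_le_sum (fun c0 _ => by have := hcon c0; omega)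
        _ = (univ : Finset (Fin r)).card * (k - 1) := by
            rw [Finset.sum_const, smul_eq_mul]
    rw [Finset.card_univ, Finset.card_univ, Fintype.card_fin, Fintype.card_fin] at hle
    omega
  obtain ⟨c0, hc0⟩ := hpigeon
  obtain ⟨Q, hQsub, hQcard⟩ := Finset.exists_subset_card_eq hc0
  have hQη : ∀ s ∈ Q, η s = c0 := by
    intro s hs
    have hmem := hQsub hs
    rw [Finset.mem_filter] at hmem
    exact hmem.2
  set sel : Fin k → Fin S0 := fun t => ((Q.orderIsoOfFin hQcard) t : Fin S0) with hsel
  have hselmem : ∀ t, sel t ∈ Q := fun t => ((Q.orderIsoOfFin hQcard) t).2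
  have hselmono : ∀ t t' : Fin k, t < t' → sel t < sel t' := by
    intro t t' h
    exact (Q.orderIsoOfFin hQcard).strictMono h
  have hselinj : Function.Injective sel := by
    intro t t' h
    exact (Q.orderIsoOfFin hQcard).injective (Subtype.coe_injective h)
  have hQsel : ∀ s ∈ Q, ∃ t, sel t = s := by
    intro s hs
    refine ⟨(Q.orderIsoOfFin hQcard).symm ⟨s, hs⟩, ?_⟩
    rw [hsel]
    simp
  set δfull : (Fin k → Bool) → Fin S0 → Bool := fun δ' s =>
    if h : s ∈ Q then δ' ((Q.orderIsoOfFin hQcard).symm ⟨s, h⟩) else true with hδfull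
  have hδfullsel : ∀ δ' t, δfull δ' (sel t) = δ' t := by
    intro δ' t
    rw [hδfull]
    simp only
    rw [dif_pos (hselmem t)]
    congr 1
    have hsub : (⟨sel t, hselmem t⟩ : {x // x ∈ Q}) = (Q.orderIsoOfFin hQcard) t :=
      Subtype.ext rfl
    rw [hsub, OrderIso.symm_apply_apply]
  set εof : (Fin k → Bool) → Fin T → Bool :=
    fun δ' x => (lab x).elim (f x) (δfull δ') with hεof
  set ptof : (Fin k → Bool) → Finset (Fin N) :=
    fun δ' => ARUD.pt F Bp Bm (εof δ') with hptof
  -- classes and their block sums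
  set cls : Fin k → Finset (Fin T) :=
    fun t => univ.filter (fun x => lab x = some (sel t)) with hcls
  have hclsmem : ∀ t, mt (sel t) ∈ cls t := by
    intro t
    rw [hcls]
    simp only [Finset.mem_filter]
    exact ⟨mem_univ _, hlabmt (sel t)⟩
  set BPt : Fin k → Finset (Fin N) := fun t => (cls t).biUnion Bp with hBPt
  set BMt : Fin k → Finset (Fin N) := fun t => (cls t).biUnion Bm with hBMt
  have hBPtne : ∀ t, (BPt t).Nonempty := by
    intro t
    obtain ⟨i, hi⟩ := hne (mt (sel t))
    exact ⟨i, by rw [hBPt]; exact Finset.mem_biUnion.2 ⟨mt (sel t), hclsmem t, hi⟩⟩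
  have hdBPBM : ∀ t, Disjoint (BPt t) (BMt t) := by
    intro t
    rw [hBPt, hBMt, Finset.disjoint_biUnion_left]
    intro x hx
    rw [Finset.disjoint_biUnion_right]
    intro y hy
    by_cases hxy : x = y
    · rw [hxy]
      exact hdpm y
    · have h := hdjj x y hxy
      exact Finset.disjoint_of_subset_left Finset.subset_union_left
        (Finset.disjoint_of_subset_right Finset.subset_union_right h)
  set psum : Fin k → ℕ := fun t => ∑ i ∈ BPt t, d0 i with hpsum
  set msum : Fin k → ℕ := fun t => ∑ i ∈ BMt t, d0 i with hmsum
  have hpm_ne : ∀ t, psum t ≠ msum t := by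
    intro t hc
    have : num (BPt t) = num (BMt t) := by
      rw [hnum]
      simp only
      have hc' : ∑ i ∈ BPt t, d0 i = ∑ i ∈ BMt t, d0 i := hc
      omega
    have heq := hnuminj this
    obtain ⟨i, hi⟩ := hBPtne t
    have hi' : i ∈ BMt t := by rw [← heq]; exact hi
    exact (Finset.disjoint_left.1 (hdBPBM t)) hi hi'
  -- numerical decomposition of the sum over a point set
  have hgdisj : ∀ ε : Fin T → Bool, Set.PairwiseDisjoint ↑(univ : Finset (Fin T))
      (fun x => if ε x then Bp x else Bm x) := by
    intro ε x _ y _ hxy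
    have h := hdjj x y hxy
    have h1 : (if ε x then Bp x else Bm x) ⊆ Bp x ∪ Bm x := by
      split_ifs
      · exact Finset.subset_union_left
      · exact Finset.subset_union_right
    have h2 : (if ε y then Bp y else Bm y) ⊆ Bp y ∪ Bm y := by
      split_ifs
      · exact Finset.subset_union_left
      · exact Finset.subset_union_right
    exact Finset.disjoint_of_subset_left h1 (Finset.disjoint_of_subset_right h2 h)
  have hFdisj : ∀ ε : Fin T → Bool, Disjoint F
      ((univ : Finset (Fin T)).biUnion (fun x => if ε x then Bp x else Bm x)) := by
    intro ε
    rw [Finset.disjoint_biUnion_right]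
    intro x _
    split_ifs
    · exact hdFp x
    · exact hdFm x
  have hNV : ∀ ε : Fin T → Bool, num (ARUD.pt F Bp Bm ε)
      = a0 + ∑ i ∈ F, d0 i + ∑ x ∈ (univ : Finset (Fin T)),
          (if ε x then ∑ i ∈ Bp x, d0 i else ∑ i ∈ Bm x, d0 i) := by
    intro ε
    rw [hnum]
    simp only [ARUD.pt]
    rw [Finset.sum_union (hFdisj ε), Finset.sum_biUnion (hgdisj ε)]
    have : ∀ x ∈ (univ : Finset (Fin T)),
        ∑ i ∈ (if ε x then Bp x else Bm x), d0 i
          = (if ε x then ∑ i ∈ Bp x, d0 i else ∑ i ∈ Bm x, d0 i) := by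
      intro x _
      split_ifs <;> rfl
    rw [Finset.sum_congr rfl this]
    omega
  -- split the coordinates into selected classes and the rest
  set Psel : Fin T → Prop := fun x => ∃ t : Fin k, lab x = some (sel t) with hPsel
  have hclsdef : ∀ t x, x ∈ cls t ↔ lab x = some (sel t) := by
    intro t x
    rw [hcls]
    simp only [Finset.mem_filter, Finset.mem_univ, true_and]
  have hfilterPsel : univ.filter Psel = (univ : Finset (Fin k)).biUnion cls := by
    ext x
    rw [Finset.mem_filter, Finset.mem_biUnion]
    constructor
    · rintro ⟨-, hx⟩
      have hx' : ∃ t, lab x = some (sel t) := hx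
      obtain ⟨t, ht⟩ := hx'
      exact ⟨t, mem_univ t, (hclsdef t x).2 ht⟩
    · rintro ⟨t, -, ht⟩
      refine ⟨mem_univ x, ?_⟩
      have : ∃ t, lab x = some (sel t) := ⟨t, (hclsdef t x).1 ht⟩
      exact this
  have hclsdisj : Set.PairwiseDisjoint ↑(univ : Finset (Fin k)) cls := by
    intro t _ t' _ htt
    rw [Function.onFun, Finset.disjoint_left]
    intro x hx hx'
    rw [hcls] at hx hx'
    simp only [Finset.mem_filter] at hx hx'
    rw [hx.2] at hx'
    exact htt (hselinj (Option.some.inj hx'.2))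
  have hεcls : ∀ (δ' : Fin k → Bool) t x, x ∈ cls t → εof δ' x = δ' t := by
    intro δ' t x hx
    rw [hcls] at hx
    simp only [Finset.mem_filter] at hx
    rw [hεof]
    simp only
    rw [hx.2]
    simp only [Option.elim]
    exact hδfullsel δ' t
  have hεrest : ∀ (δ' : Fin k → Bool) x, ¬ Psel x → εof δ' x = εof (fun _ => true) x := by
    intro δ' x hx
    rw [hεof]
    simp only
    rcases hcase : lab x with _ | s
    · rfl
    · simp only [Option.elim]
      rw [hδfull]
      simp only
      by_cases hsQ : s ∈ Q
      · exfalso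
        obtain ⟨t, ht⟩ := hQsel s hsQ
        exact hx ⟨t, by rw [hcase, ht]⟩
      · rw [dif_neg hsQ, dif_neg hsQ]
  set C0 : ℕ := a0 + ∑ i ∈ F, d0 i + ∑ x ∈ univ.filter (fun x => ¬ Psel x),
      (if εof (fun _ => true) x then ∑ i ∈ Bp x, d0 i else ∑ i ∈ Bm x, d0 i) with hC0
  have hNV2 : ∀ δ' : Fin k → Bool, num (ptof δ')
      = C0 + ∑ t ∈ (univ : Finset (Fin k)), (if δ' t then psum t else msum t) := by
    intro δ'
    have hsplitsum : ∑ x ∈ (univ : Finset (Fin T)),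
        (if εof δ' x then ∑ i ∈ Bp x, d0 i else ∑ i ∈ Bm x, d0 i)
        = ∑ x ∈ univ.filter Psel,
            (if εof δ' x then ∑ i ∈ Bp x, d0 i else ∑ i ∈ Bm x, d0 i)
          + ∑ x ∈ univ.filter (fun x => ¬ Psel x),
            (if εof δ' x then ∑ i ∈ Bp x, d0 i else ∑ i ∈ Bm x, d0 i) :=
      (Finset.sum_filter_add_sum_filter_not (univ : Finset (Fin T)) Psel _).symm
    have hrest : ∑ x ∈ univ.filter (fun x => ¬ Psel x),
        (if εof δ' x then ∑ i ∈ Bp x, d0 i else ∑ i ∈ Bm x, d0 i)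
        = ∑ x ∈ univ.filter (fun x => ¬ Psel x),
          (if εof (fun _ => true) x then ∑ i ∈ Bp x, d0 i else ∑ i ∈ Bm x, d0 i) := by
      refine Finset.sum_congr rfl (fun x hx => ?_)
      rw [Finset.mem_filter] at hx
      rw [hεrest δ' x hx.2]
    have hselpart : ∑ x ∈ univ.filter Psel,
        (if εof δ' x then ∑ i ∈ Bp x, d0 i else ∑ i ∈ Bm x, d0 i)
        = ∑ t ∈ (univ : Finset (Fin k)), (if δ' t then psum t else msum t) := by
      rw [hfilterPsel, Finset.sum_biUnion hclsdisj]
      refine Finset.sum_congr rfl (fun t _ => ?_)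
      have hcong : ∀ x ∈ cls t,
          (if εof δ' x then ∑ i ∈ Bp x, d0 i else ∑ i ∈ Bm x, d0 i)
          = (if δ' t then ∑ i ∈ Bp x, d0 i else ∑ i ∈ Bm x, d0 i) := by
        intro x hx
        rw [hεcls δ' t x hx]
      rw [Finset.sum_congr rfl hcong]
      rcases Bool.eq_false_or_eq_true (δ' t) with hb | hb
      · rw [hb]
        simp only [if_true]
        show (∑ x ∈ cls t, ∑ i ∈ Bp x, d0 i) = ∑ i ∈ (cls t).biUnion Bp, d0 i
        refine (Finset.sum_biUnion ?_).symm
        intro x hx y hy hxy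
        have h := hdjj x y hxy
        exact Finset.disjoint_of_subset_left Finset.subset_union_left
          (Finset.disjoint_of_subset_right Finset.subset_union_left h)
      · rw [hb]
        simp only [Bool.false_eq_true, if_false]
        show (∑ x ∈ cls t, ∑ i ∈ Bm x, d0 i) = ∑ i ∈ (cls t).biUnion Bm, d0 i
        refine (Finset.sum_biUnion ?_).symm
        intro x hx y hy hxy
        have h := hdjj x y hxy
        exact Finset.disjoint_of_subset_left Finset.subset_union_right
          (Finset.disjoint_of_subset_right Finset.subset_union_right h)
    rw [hptof]
    simp only
    rw [hNV (εof δ'), hsplitsum, hrest, hselpart, hC0]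
    omega
  -- the final cube data
  set ed : Fin k → ℕ := fun t => if psum t ≤ msum t then msum t - psum t
    else psum t - msum t with hed
  set δof : Finset (Fin k) → (Fin k → Bool) := fun I t =>
    if psum t ≤ msum t then !(decide (t ∈ I)) else decide (t ∈ I) with hδof
  have hδofne : ∀ I J : Finset (Fin k), I ≠ J → δof I ≠ δof J := by
    intro I J hIJ heq
    apply hIJ
    ext t
    have := congrFun heq t
    rw [hδof] at this
    simp only at this
    by_cases hle : psum t ≤ msum t
    · rw [if_pos hle, if_pos hle] at this
      constructor <;> intro h
      · by_contra hc
        simp [h, hc] at this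
      · by_contra hc
        simp [h, hc] at this
    · rw [if_neg hle, if_neg hle] at this
      constructor <;> intro h
      · by_contra hc
        simp [h, hc] at this
      · by_contra hc
        simp [h, hc] at this
  have hcontrib : ∀ (I : Finset (Fin k)) t,
      (if δof I t then psum t else msum t)
        = (if psum t ≤ msum t then psum t else msum t) + (if t ∈ I then ed t else 0) := by
    intro I t
    rw [hδof, hed]
    simp only
    by_cases hle : psum t ≤ msum t <;> by_cases hI : t ∈ I <;>
      simp [hle, hI] <;> omega
  set aa : ℕ := C0 + ∑ t ∈ (univ : Finset (Fin k)),
    (if psum t ≤ msum t then psum t else msum t) with haa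
  have hval : ∀ I : Finset (Fin k), num (ptof (δof I)) = aa + ∑ t ∈ I, ed t := by
    intro I
    rw [hNV2 (δof I)]
    have h1 : ∑ t ∈ (univ : Finset (Fin k)), (if δof I t then psum t else msum t)
        = ∑ t ∈ (univ : Finset (Fin k)),
          ((if psum t ≤ msum t then psum t else msum t) + (if t ∈ I then ed t else 0)) :=
      Finset.sum_congr rfl (fun t _ => hcontrib I t)
    rw [h1, Finset.sum_add_distrib]
    have h2 : ∑ t ∈ (univ : Finset (Fin k)), (if t ∈ I then ed t else 0)
        = ∑ t ∈ I, ed t := by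
      rw [Finset.sum_ite_mem, Finset.univ_inter]
    rw [h2, haa]
    omega
  -- membership in A
  have hmemA : ∀ I : Finset (Fin k), aa + ∑ t ∈ I, ed t ∈ A := by
    intro I
    rw [← hval I, hnum]
    exact hcube _
  -- positivity
  have hedpos : ∀ t, 1 ≤ ed t := by
    intro t
    have := hpm_ne t
    rw [hed]
    simp only
    split_ifs with h
    · omega
    · omega
  have haapos : 1 ≤ aa := by
    have h := hmemA ∅
    have hv := hval ∅
    rw [Finset.sum_empty, add_zero] at hv
    rw [hnum] at hv
    omega
  -- distinct point sets for distinct sign patterns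
  have hptne : ∀ I J : Finset (Fin k), I ≠ J → ptof (δof I) ≠ ptof (δof J) := by
    intro I J hIJ
    have hδ := hδofne I J hIJ
    have : ∃ t, δof I t ≠ δof J t := by
      by_contra hc
      push_neg at hc
      exact hδ (funext hc)
    obtain ⟨t, ht⟩ := this
    -- wlog one is true
    have key : ∀ (δ1 δ2 : Fin k → Bool), δ1 t = true → δ2 t = false →
        ptof δ1 ≠ ptof δ2 := by
      intro δ1 δ2 h1 h2 hcon
      obtain ⟨i, hi⟩ := hne (mt (sel t))
      have hi1 : i ∈ ptof δ1 := by
        rw [hptof]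
        simp only [ARUD.pt]
        refine Finset.mem_union_right _ (Finset.mem_biUnion.2 ⟨mt (sel t), mem_univ _, ?_⟩)
        rw [hεcls δ1 t _ (hclsmem t), h1, if_pos rfl]
        exact hi
      have hi2 : i ∉ ptof δ2 := by
        rw [hptof]
        simp only [ARUD.pt]
        intro hmem
        rcases Finset.mem_union.1 hmem with hF | hB
        · exact (Finset.disjoint_right.1 (hdFp (mt (sel t)))) hi hF
        · obtain ⟨y, _, hy⟩ := Finset.mem_biUnion.1 hB
          by_cases hxy : mt (sel t) = y
          · rw [← hxy] at hy
            rw [hεcls δ2 t _ (hclsmem t), h2] at hy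
            simp only [Bool.false_eq_true, if_false] at hy
            exact (Finset.disjoint_left.1 (hdpm (mt (sel t)))) hi hy
          · have hd := hdjj (mt (sel t)) y hxy
            have hy' : i ∈ Bp y ∪ Bm y := by
              rcases Bool.eq_false_or_eq_true (εof δ2 y) with hb | hb <;>
                rw [hb] at hy
              · simp only [if_true] at hy
                exact Finset.mem_union_left _ hy
              · simp only [Bool.false_eq_true, if_false] at hy
                exact Finset.mem_union_right _ hy
            exact (Finset.disjoint_left.1 hd) (Finset.mem_union_left _ hi) hy'
      rw [hcon] at hi1
      exact hi2 hi1
    rcases Bool.eq_false_or_eq_true (δof I t) with hb | hb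
    · rcases Bool.eq_false_or_eq_true (δof J t) with hb' | hb'
      · rw [hb, hb'] at ht
        exact absurd rfl ht
      · exact key (δof I) (δof J) hb hb'
    · rcases Bool.eq_false_or_eq_true (δof J t) with hb' | hb'
      · exact fun hcon => (key (δof J) (δof I) hb' hb) hcon.symm
      · rw [hb, hb'] at ht
        exact absurd rfl ht
  -- injectivity
  have hinjfinal : Function.Injective (fun I : Finset (Fin k) => aa + ∑ i ∈ I, ed i) := by
    intro I J hIJ
    by_contra hne'
    apply hptne I J hne'
    apply hnuminj
    rw [hval I, hval J]
    exact hIJ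
  -- monochromaticity
  have hmono : ∀ I J : Finset (Fin k), I ≠ J →
      χ s(aa + ∑ i ∈ I, ed i, aa + ∑ i ∈ J, ed i) = c0 := by
    intro I J hIJ
    rw [← hval I, ← hval J]
    have hδ := hδofne I J hIJ
    set D : Finset (Fin k) := univ.filter (fun t => δof I t ≠ δof J t) with hD
    have hDne : D.Nonempty := by
      rw [Finset.nonempty_iff_ne_empty]
      intro hemp
      apply hδ
      funext t
      by_contra hc
      have : t ∈ D := by
        rw [hD]
        simp only [Finset.mem_filter]
        exact ⟨mem_univ _, hc⟩
      rw [hemp] at this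
      exact absurd this (Finset.notMem_empty t)
    set tstar := D.min' hDne with htstar
    have htstarD : tstar ∈ D := D.min'_mem hDne
    have htstarne : δof I tstar ≠ δof J tstar := by
      have := htstarD
      rw [hD] at this
      simp only [Finset.mem_filter] at this
      exact this.2
    -- apply the phase A main equality at level mt (sel tstar)
    have hcond1 : ∀ i, i < mt (sel tstar) → εof (δof I) i = εof (δof J) i := by
      intro i hilt
      rw [hεof]
      simp only
      rcases hcase : lab i with _ | s
      · rfl
      · simp only [Option.elim]
        by_cases hsQ : s ∈ Q
        · obtain ⟨u, hu⟩ := hQsel s hsQ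
          rw [← hu, hδfullsel, hδfullsel]
          -- show δof I u = δof J u, i.e. u ∉ D
          by_contra hc
          have huD : u ∈ D := by
            rw [hD]
            simp only [Finset.mem_filter]
            exact ⟨mem_univ _, hc⟩
          have hule : tstar ≤ u := D.min'_le u huD
          rcases lt_or_eq_of_le hule with hult | hueq
          · -- sel tstar < sel u, so mt (sel tstar) < i, contradiction
            have hlt2 := hord (sel tstar) (sel u) (mt (sel tstar)) i
              (hlabmt (sel tstar)) (by rw [hcase, hu]) (hselmono _ _ hult)
            exact absurd hilt (not_lt.2 (le_of_lt hlt2))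
          · -- u = tstar : lab i = some (sel tstar), so mt (sel tstar) ≤ i
            have hle2 := hmtmin (sel tstar) i (by rw [hcase, hueq, hu])
            exact absurd hilt (not_lt.2 hle2)
        · rw [hδfull]
          simp only
          rw [dif_neg hsQ, dif_neg hsQ]
    have hcond2 : εof (δof I) (mt (sel tstar)) ≠ εof (δof J) (mt (sel tstar)) := by
      rw [hεcls (δof I) tstar _ (hclsmem tstar), hεcls (δof J) tstar _ (hclsmem tstar)]
      exact htstarne
    have hmaineq := hmain (εof (δof I)) (εof (δof J)) (mt (sel tstar)) hcond1 hcond2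
    have hθ := htheta (δfull (δof I)) (sel tstar)
    have hεeq : (fun x => (lab x).elim (f x) (δfull (δof I))) = εof (δof I) := rfl
    rw [hεeq] at hθ
    have hη := hQη (sel tstar) (hselmem tstar)
    rw [hptof]
    simp only
    rw [hκ] at hmaineq
    simp only at hmaineq
    rw [hmaineq, hθ, hη]
  exact ⟨aa, ed, haapos, hedpos, hmemA, hinjfinal, c0, hmono⟩
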